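/- arXiv:1211.3219 — 2 statements merged into one kernel-verified Lean document; each statement's English description precedes it below -/
import Mathlib

section
/- For κ = 1, the reduced Chaplygin vector field X (given by dM/dt = M × ω, dγ/dt = γ × ω) is conformally Hamiltonian: X = g^{-1} P_g dH with H = H1/2, where P_g is the Poisson bivector of the bracket {·,·}_g; equivalently, after the time change dt → g dt the equations become Hamiltonian with Hamiltonian H1/2. -/
open scoped BigOperators
noncomputable section

/-- ℝ³ as functions `Fin 3 → ℝ`. -/
abbrev R3 := Fin 3 → ℝ

/-- Phase space: pairs `(γ, M)`. -/
abbrev St := R3 × R3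

/-- Standard scalar product in ℝ³. -/
def dot3 (x y : R3) : ℝ := ∑ i, x i * y i

/-- Cross product in ℝ³. -/
def cross (x y : R3) : R3 :=
  ![x 1 * y 2 - x 2 * y 1, x 2 * y 0 - x 0 * y 2, x 0 * y 1 - x 1 * y 0]

/-- Levi-Civita symbol. -/
def eps (i j k : Fin 3) : ℝ :=
  ((((j : ℤ) - (i : ℤ)) * ((k : ℤ) - (i : ℤ)) * ((k : ℤ) - (j : ℤ))) / 2 : ℤ)

/-- Application of the diagonal matrix A = diag a. -/
def Aapp (a : R3) (v : R3) : R3 := fun i => a i * v i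

/-- Angular velocity ω expressed through M. -/
def omg (a : R3) (d : ℝ) (x : St) : R3 := fun i =>
  a i * x.2 i + d * dot3 x.1 (Aapp a x.2) / (1 - d * dot3 x.1 (Aapp a x.1)) * (a i * x.1 i)

/-- g(γ) = sqrt(1 - d (γ, Aγ)). -/
def gfun (a : R3) (d : ℝ) (γ : R3) : ℝ := Real.sqrt (1 - d * dot3 γ (Aapp a γ))

/-- Partial derivative in the γ (inl) or M (inr) direction. -/
def pd : (Fin 3 ⊕ Fin 3) → (St → ℝ) → St → ℝ
  | .inl i, F, x => fderiv ℝ F x (Pi.single i 1, 0)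
  | .inr i, F, x => fderiv ℝ F x (0, Pi.single i 1)

/-- Bracket of two functions determined by a structure matrix π. -/
def pb (π : St → (Fin 3 ⊕ Fin 3) → (Fin 3 ⊕ Fin 3) → ℝ) (F G : St → ℝ) (x : St) : ℝ :=
  ∑ u, ∑ v, π x u v * pd u F x * pd v G x

/-- Structure matrix of the bracket {·,·}_g. -/
def piG (a : R3) (d : ℝ) (x : St) : (Fin 3 ⊕ Fin 3) → (Fin 3 ⊕ Fin 3) → ℝ
  | .inl _, .inl _ => 0
  | .inl i, .inr j => ∑ k, eps i j k * gfun a d x.1 * x.1 k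
  | .inr i, .inl j => ∑ k, eps i j k * gfun a d x.1 * x.1 k
  | .inr i, .inr j => ∑ k, eps i j k *
      (gfun a d x.1 * x.2 k - d * dot3 x.2 (Aapp a x.1) * x.1 k / gfun a d x.1)

/-- Coordinate functions on the phase space. -/
def coordFn : (Fin 3 ⊕ Fin 3) → St → ℝ
  | .inl i => fun x => x.1 i
  | .inr i => fun x => x.2 i


/-- Coordinate projection CLMs. -/
def Lg' (i : Fin 3) : St →L[ℝ] ℝ :=
  (ContinuousLinearMap.proj i).comp (ContinuousLinearMap.fst ℝ R3 R3)
def LM' (i : Fin 3) : St →L[ℝ] ℝ :=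
  (ContinuousLinearMap.proj i).comp (ContinuousLinearMap.snd ℝ R3 R3)

def Pf (a : R3) (y : St) : ℝ := ∑ i, y.1 i * (a i * y.2 i)
def Qf (a : R3) (y : St) : ℝ := ∑ i, y.2 i * (a i * y.2 i)
def Cf (a : R3) (d : ℝ) (y : St) : ℝ := 1 - d * ∑ i, y.1 i * (a i * y.1 i)

lemma hPder (a : R3) (x : St) : HasFDerivAt (Pf a)
    (∑ i : Fin 3, (x.1 i • (a i • LM' i) + (a i * x.2 i) • Lg' i)) x := by
  apply HasFDerivAt.fun_sum
  intro i _
  exact ((Lg' i).hasFDerivAt (x := x)).mul (((LM' i).hasFDerivAt (x := x)).const_mul (a i))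

lemma hQder (a : R3) (x : St) : HasFDerivAt (Qf a)
    (∑ i : Fin 3, (x.2 i • (a i • LM' i) + (a i * x.2 i) • LM' i)) x := by
  apply HasFDerivAt.fun_sum
  intro i _
  exact ((LM' i).hasFDerivAt (x := x)).mul (((LM' i).hasFDerivAt (x := x)).const_mul (a i))

lemma hCder (a : R3) (d : ℝ) (x : St) : HasFDerivAt (Cf a d)
    (-(d • ∑ i : Fin 3, (x.1 i • (a i • Lg' i) + (a i * x.1 i) • Lg' i))) x := by
  apply HasFDerivAt.const_sub
  apply HasFDerivAt.const_mul
  apply HasFDerivAt.fun_sum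
  intro i _
  exact ((Lg' i).hasFDerivAt (x := x)).mul (((Lg' i).hasFDerivAt (x := x)).const_mul (a i))

lemma Hform (a : R3) (d : ℝ) : (fun y : St => dot3 y.2 (omg a d y) / 2)
    = fun y => 2⁻¹ * (Qf a y + d * Pf a y * Pf a y * ((fun t : ℝ => t⁻¹) ∘ Cf a d) y) := by
  funext y
  simp only [dot3, omg, Aapp, Pf, Qf, Cf, Function.comp, Fin.sum_univ_three]
  field_simp
  ring

lemma pdH_inr (a : R3) (d : ℝ) (x : St) (hx : Cf a d x ≠ 0) (j : Fin 3) :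
    pd (.inr j) (fun y => dot3 y.2 (omg a d y) / 2) x = omg a d x j := by
  have hinv := (hasDerivAt_inv hx).comp_hasFDerivAt x (hCder a d x)
  have h := ((hQder a x).fun_add ((((hPder a x).const_mul d).fun_mul (hPder a x)).fun_mul hinv)).const_mul
    (2⁻¹ : ℝ)
  rw [← Hform a d] at h
  simp only [pd, h.fderiv]
  simp only [ContinuousLinearMap.add_apply, ContinuousLinearMap.smul_apply,
    ContinuousLinearMap.sub_apply, ContinuousLinearMap.neg_apply, ContinuousLinearMap.coe_sum',
    Finset.sum_apply, ContinuousLinearMap.comp_apply, ContinuousLinearMap.proj_apply,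
    ContinuousLinearMap.coe_fst', ContinuousLinearMap.coe_snd', Lg', LM',
    smul_eq_mul, Pi.single_apply, Function.comp, Prod.fst_zero, Prod.snd_zero, Pi.zero_apply,
    Fin.sum_univ_three]
  have homg : omg a d x j = a j * x.2 j + d * Pf a x / Cf a d x * (a j * x.1 j) := rfl
  rw [homg]
  generalize hc : Cf a d x = c at hx ⊢
  generalize Pf a x = p
  fin_cases j <;> simp [Fin.ext_iff] <;> field_simp <;> ring

lemma pdH_inl (a : R3) (d : ℝ) (x : St) (hx : Cf a d x ≠ 0) (j : Fin 3) :
    pd (.inl j) (fun y => dot3 y.2 (omg a d y) / 2) x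
      = d * Pf a x / Cf a d x * omg a d x j := by
  have hinv := (hasDerivAt_inv hx).comp_hasFDerivAt x (hCder a d x)
  have h := ((hQder a x).fun_add ((((hPder a x).const_mul d).fun_mul (hPder a x)).fun_mul hinv)).const_mul
    (2⁻¹ : ℝ)
  rw [← Hform a d] at h
  simp only [pd, h.fderiv]
  simp only [ContinuousLinearMap.add_apply, ContinuousLinearMap.smul_apply,
    ContinuousLinearMap.sub_apply, ContinuousLinearMap.neg_apply, ContinuousLinearMap.coe_sum',
    Finset.sum_apply, ContinuousLinearMap.comp_apply, ContinuousLinearMap.proj_apply,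
    ContinuousLinearMap.coe_fst', ContinuousLinearMap.coe_snd', Lg', LM',
    smul_eq_mul, Pi.single_apply, Function.comp, Prod.fst_zero, Prod.snd_zero, Pi.zero_apply,
    Fin.sum_univ_three]
  have homg : omg a d x j = a j * x.2 j + d * Pf a x / Cf a d x * (a j * x.1 j) := rfl
  rw [homg]
  generalize hc : Cf a d x = c at hx ⊢
  generalize Pf a x = p
  fin_cases j <;> simp [Fin.ext_iff] <;> field_simp <;> ring

lemma pd_coord_ll (k j : Fin 3) (x : St) :
    pd (.inl j) (coordFn (.inl k)) x = if k = j then 1 else 0 := by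
  have h : HasFDerivAt (coordFn (.inl k)) (Lg' k) x := (Lg' k).hasFDerivAt
  simp [pd, h.fderiv, Lg', Pi.single_apply]

lemma pd_coord_lr (k j : Fin 3) (x : St) :
    pd (.inr j) (coordFn (.inl k)) x = 0 := by
  have h : HasFDerivAt (coordFn (.inl k)) (Lg' k) x := (Lg' k).hasFDerivAt
  simp [pd, h.fderiv, Lg']

lemma pd_coord_rl (k j : Fin 3) (x : St) :
    pd (.inl j) (coordFn (.inr k)) x = 0 := by
  have h : HasFDerivAt (coordFn (.inr k)) (LM' k) x := (LM' k).hasFDerivAt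
  simp [pd, h.fderiv, LM']

lemma pd_coord_rr (k j : Fin 3) (x : St) :
    pd (.inr j) (coordFn (.inr k)) x = if k = j then 1 else 0 := by
  have h : HasFDerivAt (coordFn (.inr k)) (LM' k) x := (LM' k).hasFDerivAt
  simp [pd, h.fderiv, LM', Pi.single_apply]

set_option maxHeartbeats 1000000 in
/-- for κ = 1 the reduced Chaplygin vector field
X = (γ × ω, M × ω) is conformally Hamiltonian: X = g⁻¹ P_g dH with H = H1/2,
componentwise X_k = g⁻¹ {H, x_k}_g. -/
theorem conformally_hamiltonian_chaplygin
    (a : R3) (d : ℝ) (hd : 0 < d)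
    (x : St) (hx : 0 < 1 - d * dot3 x.1 (Aapp a x.1)) :
    (∀ i : Fin 3, cross x.1 (omg a d x) i =
      (gfun a d x.1)⁻¹ *
        pb (piG a d) (fun y => dot3 y.2 (omg a d y) / 2) (coordFn (.inl i)) x) ∧
    (∀ i : Fin 3, cross x.2 (omg a d x) i =
      (gfun a d x.1)⁻¹ *
        pb (piG a d) (fun y => dot3 y.2 (omg a d y) / 2) (coordFn (.inr i)) x) := by
  have hcne : Cf a d x ≠ 0 := ne_of_gt hx
  have hgpos : 0 < gfun a d x.1 := Real.sqrt_pos.mpr hx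
  have hgne : gfun a d x.1 ≠ 0 := ne_of_gt hgpos
  have hg2 : gfun a d x.1 ^ 2 = 1 - d * dot3 x.1 (Aapp a x.1) := Real.sq_sqrt hx.le
  have hpcomm : dot3 x.2 (Aapp a x.1) = Pf a x := by
    simp only [dot3, Aapp, Pf, Fin.sum_univ_three]; ring
  have hcf : Cf a d x = gfun a d x.1 ^ 2 := by rw [hg2]; rfl
  constructor <;> intro i <;>
  · simp only [pb, Fintype.sum_sum_type, pdH_inl a d x hcne, pdH_inr a d x hcne,
      pd_coord_ll, pd_coord_lr, pd_coord_rl, pd_coord_rr, piG, hpcomm, hcf,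
      mul_zero, zero_mul, mul_one, Fin.sum_univ_three]
    fin_cases i <;>
      simp only [cross, eps, Matrix.cons_val_zero, Matrix.cons_val_one, Matrix.head_cons,
        Matrix.cons_val_two, Matrix.tail_cons, Fin.isValue] <;>
      simp only [Fin.ext_iff, show ((0:Fin 3).val = 0) from rfl, show ((1:Fin 3).val = 1) from rfl,
        show ((2:Fin 3).val = 2) from rfl] <;>
      norm_num <;>
      field_simp <;>
      ring
end
end

section
/- The functions C1 = (γ, γ) and C2 = (γ, B M) are Casimir functions of the bracket {·,·}_b: they Poisson-commute with all coordinate functions γ_i and M_i. -/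
open scoped BigOperators
noncomputable section
set_option maxHeartbeats 2000000

/-- Entries of B = tr(A⁻¹)E - 2A⁻¹ (the case κ = -1): b_i = tr A⁻¹ - 2/a_i. -/
def bb (a : R3) (i : Fin 3) : ℝ := (∑ m, (a m)⁻¹) - 2 * (a i)⁻¹

/-- α_k = C₂ + b_k (γ, M) with C₂ = (γ, B M). -/
def alf (a : R3) (x : St) (k : Fin 3) : ℝ :=
  (∑ m, x.1 m * bb a m * x.2 m) + bb a k * dot3 x.1 x.2

/-- The table of brackets {M_i, γ_j}_b. -/
def pmg (a : R3) (d : ℝ) (γ : R3) : Fin 3 → Fin 3 → ℝ :=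
  let g := gfun a d γ
  let b := bb a
  ![![ g * (b 1 - b 2) * γ 0 * γ 1 * γ 2,
       g * γ 2 * (b 2 * (γ 0 ^ 2 + γ 2 ^ 2) + b 1 * γ 1 ^ 2 - b 1 * b 2 / (2 * d)),
       -(g * γ 1 * (b 1 * (γ 0 ^ 2 + γ 1 ^ 2) + b 2 * γ 2 ^ 2 - b 1 * b 2 / (2 * d))) ],
    ![ -(g * γ 2 * (b 0 * γ 0 ^ 2 + b 2 * (γ 1 ^ 2 + γ 2 ^ 2) - b 0 * b 2 / (2 * d))),
       g * (b 2 - b 0) * γ 0 * γ 1 * γ 2,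
       g * γ 0 * (b 0 * (γ 0 ^ 2 + γ 1 ^ 2) + b 2 * γ 2 ^ 2 - b 0 * b 2 / (2 * d)) ],
    ![ g * γ 1 * (b 0 * γ 0 ^ 2 + b 1 * (γ 1 ^ 2 + γ 2 ^ 2) - b 0 * b 1 / (2 * d)),
       -(g * γ 0 * (b 0 * (γ 0 ^ 2 + γ 2 ^ 2) + b 1 * γ 1 ^ 2 - b 0 * b 1 / (2 * d))),
       g * (b 0 - b 1) * γ 0 * γ 1 * γ 2 ]]

/-- The component f_k with {M_i, M_j}_b = Σ_k ε_ijk f_k. -/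
def fmm (a : R3) (d : ℝ) (x : St) (k : Fin 3) : ℝ :=
  let g := gfun a d x.1
  let b := bb a
  g * (-(alf a x k) * x.1 k + dot3 x.1 x.1 * b k * x.2 k - (b k) ^ 2 * x.2 k / (2 * d))
  - g⁻¹ * x.1 k * (2 * d * dot3 x.1 x.1 - (b 0 + b 1 + b 2)) *
    ( alf a x k * b k / (∏ m ∈ Finset.univ.filter (fun m => m ≠ k), (b k + b m))
      + (∏ m ∈ Finset.univ.filter (fun m => m ≠ k), (b k - b m)) * b k * x.1 k * x.2 k /
          ((b 0 + b 1) * (b 1 + b 2) * (b 0 + b 2)) )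

/-- Structure matrix of the κ = -1 bracket {·,·}_b. -/
def piB (a : R3) (d : ℝ) (x : St) : (Fin 3 ⊕ Fin 3) → (Fin 3 ⊕ Fin 3) → ℝ
  | .inl _, .inl _ => 0
  | .inl i, .inr j => -(pmg a d x.1 j i)
  | .inr i, .inl j => pmg a d x.1 i j
  | .inr i, .inr j => ∑ k, eps i j k * fmm a d x k


noncomputable def Pm (m : Fin 3) : St →L[ℝ] ℝ :=
  (ContinuousLinearMap.proj m).comp (ContinuousLinearMap.fst ℝ R3 R3)
noncomputable def Qm (m : Fin 3) : St →L[ℝ] ℝ :=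
  (ContinuousLinearMap.proj m).comp (ContinuousLinearMap.snd ℝ R3 R3)
lemma hasP (m : Fin 3) (x : St) : HasFDerivAt (fun y : St => y.1 m) (Pm m) x := (Pm m).hasFDerivAt
lemma hasQ (m : Fin 3) (x : St) : HasFDerivAt (fun y : St => y.2 m) (Qm m) x := (Qm m).hasFDerivAt

lemma pd_coord (u v : Fin 3 ⊕ Fin 3) (x : St) :
    pd u (coordFn v) x = if u = v then 1 else 0 := by
  rcases u with i | i <;> rcases v with j | j <;>
    simp only [pd, coordFn] <;>
    [rw [(hasP j x).fderiv]; rw [(hasQ j x).fderiv]; rw [(hasP j x).fderiv]; rw [(hasQ j x).fderiv]] <;>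
    simp [Pm, Qm, Pi.single_apply, eq_comm]

lemma hasF1 (x : St) : HasFDerivAt (fun y : St => dot3 y.1 y.1)
    (∑ m, (x.1 m • Pm m + x.1 m • Pm m)) x := by
  unfold dot3
  exact HasFDerivAt.fun_sum (fun m _ => (hasP m x).mul (hasP m x))

lemma hasF2 (c : R3) (x : St) : HasFDerivAt (fun y : St => ∑ m, y.1 m * c m * y.2 m)
    (∑ m, ((x.1 m * c m) • Qm m + x.2 m • (c m • Pm m))) x :=
  HasFDerivAt.fun_sum (fun m _ => ((hasP m x).mul_const (c m)).mul (hasQ m x))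

lemma pd_C1_inl (i : Fin 3) (x : St) : pd (.inl i) (fun y : St => dot3 y.1 y.1) x = 2 * x.1 i := by
  show fderiv ℝ _ x (Pi.single i 1, 0) = _
  rw [(hasF1 x).fderiv]
  fin_cases i <;> simp [Pm, Qm, Fin.sum_univ_three, Pi.single_apply] <;> ring

lemma pd_C1_inr (i : Fin 3) (x : St) : pd (.inr i) (fun y : St => dot3 y.1 y.1) x = 0 := by
  show fderiv ℝ _ x (0, Pi.single i 1) = _
  rw [(hasF1 x).fderiv]
  simp [Pm, Qm]

lemma pd_C2_inl (c : R3) (i : Fin 3) (x : St) :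
    pd (.inl i) (fun y : St => ∑ m, y.1 m * c m * y.2 m) x = c i * x.2 i := by
  show fderiv ℝ _ x (Pi.single i 1, 0) = _
  rw [(hasF2 c x).fderiv]
  fin_cases i <;> simp [Pm, Qm, Fin.sum_univ_three, Pi.single_apply] <;> ring

lemma pd_C2_inr (c : R3) (i : Fin 3) (x : St) :
    pd (.inr i) (fun y : St => ∑ m, y.1 m * c m * y.2 m) x = x.1 i * c i := by
  show fderiv ℝ _ x (0, Pi.single i 1) = _
  rw [(hasF2 c x).fderiv]
  fin_cases i <;> simp [Pm, Qm, Fin.sum_univ_three, Pi.single_apply]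

lemma filt0 (f : Fin 3 → ℝ) : (∏ m ∈ Finset.univ.filter (fun m => m ≠ (0:Fin 3)), f m) = f 1 * f 2 := by
  rw [show (Finset.univ.filter (fun m => m ≠ (0:Fin 3))) = {1, 2} from by decide]
  rw [Finset.prod_pair (by decide)]
lemma filt1 (f : Fin 3 → ℝ) : (∏ m ∈ Finset.univ.filter (fun m => m ≠ (1:Fin 3)), f m) = f 0 * f 2 := by
  rw [show (Finset.univ.filter (fun m => m ≠ (1:Fin 3))) = {0, 2} from by decide]
  rw [Finset.prod_pair (by decide)]
lemma filt2 (f : Fin 3 → ℝ) : (∏ m ∈ Finset.univ.filter (fun m => m ≠ (2:Fin 3)), f m) = f 0 * f 1 := by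
  rw [show (Finset.univ.filter (fun m => m ≠ (2:Fin 3))) = {0, 1} from by decide]
  rw [Finset.prod_pair (by decide)]

lemma eps000 : eps 0 0 0 = (0 : ℝ) := by norm_num [eps]
lemma eps001 : eps 0 0 1 = (0 : ℝ) := by norm_num [eps]
lemma eps002 : eps 0 0 2 = (0 : ℝ) := by norm_num [eps]
lemma eps010 : eps 0 1 0 = (0 : ℝ) := by norm_num [eps]
lemma eps011 : eps 0 1 1 = (0 : ℝ) := by norm_num [eps]
lemma eps012 : eps 0 1 2 = (1 : ℝ) := by norm_num [eps]
lemma eps020 : eps 0 2 0 = (0 : ℝ) := by norm_num [eps]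
lemma eps021 : eps 0 2 1 = (-1 : ℝ) := by norm_num [eps]
lemma eps022 : eps 0 2 2 = (0 : ℝ) := by norm_num [eps]
lemma eps100 : eps 1 0 0 = (0 : ℝ) := by norm_num [eps]
lemma eps101 : eps 1 0 1 = (0 : ℝ) := by norm_num [eps]
lemma eps102 : eps 1 0 2 = (-1 : ℝ) := by norm_num [eps]
lemma eps110 : eps 1 1 0 = (0 : ℝ) := by norm_num [eps]
lemma eps111 : eps 1 1 1 = (0 : ℝ) := by norm_num [eps]
lemma eps112 : eps 1 1 2 = (0 : ℝ) := by norm_num [eps]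
lemma eps120 : eps 1 2 0 = (1 : ℝ) := by norm_num [eps]
lemma eps121 : eps 1 2 1 = (0 : ℝ) := by norm_num [eps]
lemma eps122 : eps 1 2 2 = (0 : ℝ) := by norm_num [eps]
lemma eps200 : eps 2 0 0 = (0 : ℝ) := by norm_num [eps]
lemma eps201 : eps 2 0 1 = (1 : ℝ) := by norm_num [eps]
lemma eps202 : eps 2 0 2 = (0 : ℝ) := by norm_num [eps]
lemma eps210 : eps 2 1 0 = (-1 : ℝ) := by norm_num [eps]
lemma eps211 : eps 2 1 1 = (0 : ℝ) := by norm_num [eps]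
lemma eps212 : eps 2 1 2 = (0 : ℝ) := by norm_num [eps]
lemma eps220 : eps 2 2 0 = (0 : ℝ) := by norm_num [eps]
lemma eps221 : eps 2 2 1 = (0 : ℝ) := by norm_num [eps]
lemma eps222 : eps 2 2 2 = (0 : ℝ) := by norm_num [eps]

lemma pb_coord (π : St → (Fin 3 ⊕ Fin 3) → (Fin 3 ⊕ Fin 3) → ℝ) (F : St → ℝ)
    (u : Fin 3 ⊕ Fin 3) (x : St) :
    pb π F (coordFn u) x = ∑ v, π x v u * pd v F x := by
  unfold pb
  refine Finset.sum_congr rfl fun v _ => ?_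
  rw [Finset.sum_eq_single u]
  · rw [pd_coord]; simp
  · intro w _ hw; rw [pd_coord]; simp [hw]
  · simp

lemma pd_C2e_inl (c : R3) (i : Fin 3) (x : St) :
    pd (.inl i) (fun y : St => y.1 0 * c 0 * y.2 0 + y.1 1 * c 1 * y.2 1 + y.1 2 * c 2 * y.2 2) x
      = c i * x.2 i := by
  have h : (fun y : St => y.1 0 * c 0 * y.2 0 + y.1 1 * c 1 * y.2 1 + y.1 2 * c 2 * y.2 2)
      = (fun y : St => ∑ m, y.1 m * c m * y.2 m) := by
    funext y; rw [Fin.sum_univ_three]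
  rw [h, pd_C2_inl]

lemma pd_C2e_inr (c : R3) (i : Fin 3) (x : St) :
    pd (.inr i) (fun y : St => y.1 0 * c 0 * y.2 0 + y.1 1 * c 1 * y.2 1 + y.1 2 * c 2 * y.2 2) x
      = x.1 i * c i := by
  have h : (fun y : St => y.1 0 * c 0 * y.2 0 + y.1 1 * c 1 * y.2 1 + y.1 2 * c 2 * y.2 2)
      = (fun y : St => ∑ m, y.1 m * c m * y.2 m) := by
    funext y; rw [Fin.sum_univ_three]
  rw [h, pd_C2_inr]

lemma pd_C1e_inl (i : Fin 3) (x : St) :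
    pd (.inl i) (fun y : St => y.1 0 * y.1 0 + y.1 1 * y.1 1 + y.1 2 * y.1 2) x = 2 * x.1 i := by
  have h : (fun y : St => y.1 0 * y.1 0 + y.1 1 * y.1 1 + y.1 2 * y.1 2)
      = (fun y : St => dot3 y.1 y.1) := by
    funext y; rw [dot3, Fin.sum_univ_three]
  rw [h, pd_C1_inl]

lemma pd_C1e_inr (i : Fin 3) (x : St) :
    pd (.inr i) (fun y : St => y.1 0 * y.1 0 + y.1 1 * y.1 1 + y.1 2 * y.1 2) x = 0 := by
  have h : (fun y : St => y.1 0 * y.1 0 + y.1 1 * y.1 1 + y.1 2 * y.1 2)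
      = (fun y : St => dot3 y.1 y.1) := by
    funext y; rw [dot3, Fin.sum_univ_three]
  rw [h, pd_C1_inr]

theorem case_C1_inl0
    (a : R3) (d : ℝ) (hd : 0 < d) (ha : ∀ i, a i ≠ 0)
    (hb : ∀ i j : Fin 3, bb a i + bb a j ≠ 0)
    (x : St) (hx : 0 < 1 - d * dot3 x.1 (Aapp a x.1)) :
    pb (piB a d) (fun y => dot3 y.1 y.1) (coordFn (.inl 0)) x = 0 := by
  have hd0 : d ≠ 0 := ne_of_gt hd
  have hg : gfun a d x.1 ≠ 0 := ne_of_gt (Real.sqrt_pos.mpr hx)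
  have hb0 : bb a 0 ≠ 0 := fun h => hb 0 0 (by rw [h]; ring)
  have hb1 : bb a 1 ≠ 0 := fun h => hb 1 1 (by rw [h]; ring)
  have hb2 : bb a 2 ≠ 0 := fun h => hb 2 2 (by rw [h]; ring)
  have hb01 := hb 0 1
  have hb02 := hb 0 2
  have hb12 := hb 1 2
  have hb10 := hb 1 0
  have hb20 := hb 2 0
  have hb21 := hb 2 1
  rw [pb_coord]
  simp only [Fintype.sum_sum_type, Fin.sum_univ_three, piB, Fin.isValue, dot3,
    pd_C2e_inl, pd_C2e_inr, pd_C1e_inl, pd_C1e_inr]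
  simp only [Fin.sum_univ_three, eps000, eps001, eps002, eps010, eps011, eps012,
    eps020, eps021, eps022, eps100, eps101, eps102, eps110, eps111, eps112,
    eps120, eps121, eps122, eps200, eps201, eps202, eps210, eps211, eps212,
    eps220, eps221, eps222, pmg, fmm, alf, dot3, filt0, filt1, filt2,
    Matrix.cons_val_zero, Matrix.cons_val_one, Matrix.head_cons, Matrix.cons_val_two,
    Matrix.tail_cons]
  try field_simp
  try ring
  try norm_num

theorem case_C2_inl0
    (a : R3) (d : ℝ) (hd : 0 < d) (ha : ∀ i, a i ≠ 0)
    (hb : ∀ i j : Fin 3, bb a i + bb a j ≠ 0)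
    (x : St) (hx : 0 < 1 - d * dot3 x.1 (Aapp a x.1)) :
    pb (piB a d) (fun y => ∑ m, y.1 m * bb a m * y.2 m) (coordFn (.inl 0)) x = 0 := by
  have hd0 : d ≠ 0 := ne_of_gt hd
  have hg : gfun a d x.1 ≠ 0 := ne_of_gt (Real.sqrt_pos.mpr hx)
  have hb0 : bb a 0 ≠ 0 := fun h => hb 0 0 (by rw [h]; ring)
  have hb1 : bb a 1 ≠ 0 := fun h => hb 1 1 (by rw [h]; ring)
  have hb2 : bb a 2 ≠ 0 := fun h => hb 2 2 (by rw [h]; ring)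
  have hb01 := hb 0 1
  have hb02 := hb 0 2
  have hb12 := hb 1 2
  have hb10 := hb 1 0
  have hb20 := hb 2 0
  have hb21 := hb 2 1
  rw [pb_coord]
  simp only [Fintype.sum_sum_type, Fin.sum_univ_three, piB, Fin.isValue, dot3,
    pd_C2e_inl, pd_C2e_inr, pd_C1e_inl, pd_C1e_inr]
  simp only [Fin.sum_univ_three, eps000, eps001, eps002, eps010, eps011, eps012,
    eps020, eps021, eps022, eps100, eps101, eps102, eps110, eps111, eps112,
    eps120, eps121, eps122, eps200, eps201, eps202, eps210, eps211, eps212,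
    eps220, eps221, eps222, pmg, fmm, alf, dot3, filt0, filt1, filt2,
    Matrix.cons_val_zero, Matrix.cons_val_one, Matrix.head_cons, Matrix.cons_val_two,
    Matrix.tail_cons]
  try field_simp
  try ring
  try norm_num

theorem case_C1_inl1
    (a : R3) (d : ℝ) (hd : 0 < d) (ha : ∀ i, a i ≠ 0)
    (hb : ∀ i j : Fin 3, bb a i + bb a j ≠ 0)
    (x : St) (hx : 0 < 1 - d * dot3 x.1 (Aapp a x.1)) :
    pb (piB a d) (fun y => dot3 y.1 y.1) (coordFn (.inl 1)) x = 0 := by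
  have hd0 : d ≠ 0 := ne_of_gt hd
  have hg : gfun a d x.1 ≠ 0 := ne_of_gt (Real.sqrt_pos.mpr hx)
  have hb0 : bb a 0 ≠ 0 := fun h => hb 0 0 (by rw [h]; ring)
  have hb1 : bb a 1 ≠ 0 := fun h => hb 1 1 (by rw [h]; ring)
  have hb2 : bb a 2 ≠ 0 := fun h => hb 2 2 (by rw [h]; ring)
  have hb01 := hb 0 1
  have hb02 := hb 0 2
  have hb12 := hb 1 2
  have hb10 := hb 1 0
  have hb20 := hb 2 0
  have hb21 := hb 2 1
  rw [pb_coord]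
  simp only [Fintype.sum_sum_type, Fin.sum_univ_three, piB, Fin.isValue, dot3,
    pd_C2e_inl, pd_C2e_inr, pd_C1e_inl, pd_C1e_inr]
  simp only [Fin.sum_univ_three, eps000, eps001, eps002, eps010, eps011, eps012,
    eps020, eps021, eps022, eps100, eps101, eps102, eps110, eps111, eps112,
    eps120, eps121, eps122, eps200, eps201, eps202, eps210, eps211, eps212,
    eps220, eps221, eps222, pmg, fmm, alf, dot3, filt0, filt1, filt2,
    Matrix.cons_val_zero, Matrix.cons_val_one, Matrix.head_cons, Matrix.cons_val_two,
    Matrix.tail_cons]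
  try field_simp
  try ring
  try norm_num

theorem case_C2_inl1
    (a : R3) (d : ℝ) (hd : 0 < d) (ha : ∀ i, a i ≠ 0)
    (hb : ∀ i j : Fin 3, bb a i + bb a j ≠ 0)
    (x : St) (hx : 0 < 1 - d * dot3 x.1 (Aapp a x.1)) :
    pb (piB a d) (fun y => ∑ m, y.1 m * bb a m * y.2 m) (coordFn (.inl 1)) x = 0 := by
  have hd0 : d ≠ 0 := ne_of_gt hd
  have hg : gfun a d x.1 ≠ 0 := ne_of_gt (Real.sqrt_pos.mpr hx)
  have hb0 : bb a 0 ≠ 0 := fun h => hb 0 0 (by rw [h]; ring)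
  have hb1 : bb a 1 ≠ 0 := fun h => hb 1 1 (by rw [h]; ring)
  have hb2 : bb a 2 ≠ 0 := fun h => hb 2 2 (by rw [h]; ring)
  have hb01 := hb 0 1
  have hb02 := hb 0 2
  have hb12 := hb 1 2
  have hb10 := hb 1 0
  have hb20 := hb 2 0
  have hb21 := hb 2 1
  rw [pb_coord]
  simp only [Fintype.sum_sum_type, Fin.sum_univ_three, piB, Fin.isValue, dot3,
    pd_C2e_inl, pd_C2e_inr, pd_C1e_inl, pd_C1e_inr]
  simp only [Fin.sum_univ_three, eps000, eps001, eps002, eps010, eps011, eps012,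
    eps020, eps021, eps022, eps100, eps101, eps102, eps110, eps111, eps112,
    eps120, eps121, eps122, eps200, eps201, eps202, eps210, eps211, eps212,
    eps220, eps221, eps222, pmg, fmm, alf, dot3, filt0, filt1, filt2,
    Matrix.cons_val_zero, Matrix.cons_val_one, Matrix.head_cons, Matrix.cons_val_two,
    Matrix.tail_cons]
  try field_simp
  try ring
  try norm_num

theorem case_C1_inl2
    (a : R3) (d : ℝ) (hd : 0 < d) (ha : ∀ i, a i ≠ 0)
    (hb : ∀ i j : Fin 3, bb a i + bb a j ≠ 0)
    (x : St) (hx : 0 < 1 - d * dot3 x.1 (Aapp a x.1)) :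
    pb (piB a d) (fun y => dot3 y.1 y.1) (coordFn (.inl 2)) x = 0 := by
  have hd0 : d ≠ 0 := ne_of_gt hd
  have hg : gfun a d x.1 ≠ 0 := ne_of_gt (Real.sqrt_pos.mpr hx)
  have hb0 : bb a 0 ≠ 0 := fun h => hb 0 0 (by rw [h]; ring)
  have hb1 : bb a 1 ≠ 0 := fun h => hb 1 1 (by rw [h]; ring)
  have hb2 : bb a 2 ≠ 0 := fun h => hb 2 2 (by rw [h]; ring)
  have hb01 := hb 0 1
  have hb02 := hb 0 2
  have hb12 := hb 1 2
  have hb10 := hb 1 0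
  have hb20 := hb 2 0
  have hb21 := hb 2 1
  rw [pb_coord]
  simp only [Fintype.sum_sum_type, Fin.sum_univ_three, piB, Fin.isValue, dot3,
    pd_C2e_inl, pd_C2e_inr, pd_C1e_inl, pd_C1e_inr]
  simp only [Fin.sum_univ_three, eps000, eps001, eps002, eps010, eps011, eps012,
    eps020, eps021, eps022, eps100, eps101, eps102, eps110, eps111, eps112,
    eps120, eps121, eps122, eps200, eps201, eps202, eps210, eps211, eps212,
    eps220, eps221, eps222, pmg, fmm, alf, dot3, filt0, filt1, filt2,
    Matrix.cons_val_zero, Matrix.cons_val_one, Matrix.head_cons, Matrix.cons_val_two,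
    Matrix.tail_cons]
  try field_simp
  try ring
  try norm_num

theorem case_C2_inl2
    (a : R3) (d : ℝ) (hd : 0 < d) (ha : ∀ i, a i ≠ 0)
    (hb : ∀ i j : Fin 3, bb a i + bb a j ≠ 0)
    (x : St) (hx : 0 < 1 - d * dot3 x.1 (Aapp a x.1)) :
    pb (piB a d) (fun y => ∑ m, y.1 m * bb a m * y.2 m) (coordFn (.inl 2)) x = 0 := by
  have hd0 : d ≠ 0 := ne_of_gt hd
  have hg : gfun a d x.1 ≠ 0 := ne_of_gt (Real.sqrt_pos.mpr hx)
  have hb0 : bb a 0 ≠ 0 := fun h => hb 0 0 (by rw [h]; ring)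
  have hb1 : bb a 1 ≠ 0 := fun h => hb 1 1 (by rw [h]; ring)
  have hb2 : bb a 2 ≠ 0 := fun h => hb 2 2 (by rw [h]; ring)
  have hb01 := hb 0 1
  have hb02 := hb 0 2
  have hb12 := hb 1 2
  have hb10 := hb 1 0
  have hb20 := hb 2 0
  have hb21 := hb 2 1
  rw [pb_coord]
  simp only [Fintype.sum_sum_type, Fin.sum_univ_three, piB, Fin.isValue, dot3,
    pd_C2e_inl, pd_C2e_inr, pd_C1e_inl, pd_C1e_inr]
  simp only [Fin.sum_univ_three, eps000, eps001, eps002, eps010, eps011, eps012,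
    eps020, eps021, eps022, eps100, eps101, eps102, eps110, eps111, eps112,
    eps120, eps121, eps122, eps200, eps201, eps202, eps210, eps211, eps212,
    eps220, eps221, eps222, pmg, fmm, alf, dot3, filt0, filt1, filt2,
    Matrix.cons_val_zero, Matrix.cons_val_one, Matrix.head_cons, Matrix.cons_val_two,
    Matrix.tail_cons]
  try field_simp
  try ring
  try norm_num

theorem case_C1_inr0
    (a : R3) (d : ℝ) (hd : 0 < d) (ha : ∀ i, a i ≠ 0)
    (hb : ∀ i j : Fin 3, bb a i + bb a j ≠ 0)
    (x : St) (hx : 0 < 1 - d * dot3 x.1 (Aapp a x.1)) :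
    pb (piB a d) (fun y => dot3 y.1 y.1) (coordFn (.inr 0)) x = 0 := by
  have hd0 : d ≠ 0 := ne_of_gt hd
  have hg : gfun a d x.1 ≠ 0 := ne_of_gt (Real.sqrt_pos.mpr hx)
  have hb0 : bb a 0 ≠ 0 := fun h => hb 0 0 (by rw [h]; ring)
  have hb1 : bb a 1 ≠ 0 := fun h => hb 1 1 (by rw [h]; ring)
  have hb2 : bb a 2 ≠ 0 := fun h => hb 2 2 (by rw [h]; ring)
  have hb01 := hb 0 1
  have hb02 := hb 0 2
  have hb12 := hb 1 2
  have hb10 := hb 1 0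
  have hb20 := hb 2 0
  have hb21 := hb 2 1
  rw [pb_coord]
  simp only [Fintype.sum_sum_type, Fin.sum_univ_three, piB, Fin.isValue, dot3,
    pd_C2e_inl, pd_C2e_inr, pd_C1e_inl, pd_C1e_inr]
  simp only [Fin.sum_univ_three, eps000, eps001, eps002, eps010, eps011, eps012,
    eps020, eps021, eps022, eps100, eps101, eps102, eps110, eps111, eps112,
    eps120, eps121, eps122, eps200, eps201, eps202, eps210, eps211, eps212,
    eps220, eps221, eps222, pmg, fmm, alf, dot3, filt0, filt1, filt2,
    Matrix.cons_val_zero, Matrix.cons_val_one, Matrix.head_cons, Matrix.cons_val_two,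
    Matrix.tail_cons]
  try field_simp
  try ring
  try norm_num

theorem case_C2_inr0
    (a : R3) (d : ℝ) (hd : 0 < d) (ha : ∀ i, a i ≠ 0)
    (hb : ∀ i j : Fin 3, bb a i + bb a j ≠ 0)
    (x : St) (hx : 0 < 1 - d * dot3 x.1 (Aapp a x.1)) :
    pb (piB a d) (fun y => ∑ m, y.1 m * bb a m * y.2 m) (coordFn (.inr 0)) x = 0 := by
  have hd0 : d ≠ 0 := ne_of_gt hd
  have hg : gfun a d x.1 ≠ 0 := ne_of_gt (Real.sqrt_pos.mpr hx)
  have hb0 : bb a 0 ≠ 0 := fun h => hb 0 0 (by rw [h]; ring)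
  have hb1 : bb a 1 ≠ 0 := fun h => hb 1 1 (by rw [h]; ring)
  have hb2 : bb a 2 ≠ 0 := fun h => hb 2 2 (by rw [h]; ring)
  have hb01 := hb 0 1
  have hb02 := hb 0 2
  have hb12 := hb 1 2
  have hb10 := hb 1 0
  have hb20 := hb 2 0
  have hb21 := hb 2 1
  rw [pb_coord]
  simp only [Fintype.sum_sum_type, Fin.sum_univ_three, piB, Fin.isValue, dot3,
    pd_C2e_inl, pd_C2e_inr, pd_C1e_inl, pd_C1e_inr]
  simp only [Fin.sum_univ_three, eps000, eps001, eps002, eps010, eps011, eps012,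
    eps020, eps021, eps022, eps100, eps101, eps102, eps110, eps111, eps112,
    eps120, eps121, eps122, eps200, eps201, eps202, eps210, eps211, eps212,
    eps220, eps221, eps222, pmg, fmm, alf, dot3, filt0, filt1, filt2,
    Matrix.cons_val_zero, Matrix.cons_val_one, Matrix.head_cons, Matrix.cons_val_two,
    Matrix.tail_cons]
  try field_simp
  try ring
  try norm_num

theorem case_C1_inr1
    (a : R3) (d : ℝ) (hd : 0 < d) (ha : ∀ i, a i ≠ 0)
    (hb : ∀ i j : Fin 3, bb a i + bb a j ≠ 0)
    (x : St) (hx : 0 < 1 - d * dot3 x.1 (Aapp a x.1)) :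
    pb (piB a d) (fun y => dot3 y.1 y.1) (coordFn (.inr 1)) x = 0 := by
  have hd0 : d ≠ 0 := ne_of_gt hd
  have hg : gfun a d x.1 ≠ 0 := ne_of_gt (Real.sqrt_pos.mpr hx)
  have hb0 : bb a 0 ≠ 0 := fun h => hb 0 0 (by rw [h]; ring)
  have hb1 : bb a 1 ≠ 0 := fun h => hb 1 1 (by rw [h]; ring)
  have hb2 : bb a 2 ≠ 0 := fun h => hb 2 2 (by rw [h]; ring)
  have hb01 := hb 0 1
  have hb02 := hb 0 2
  have hb12 := hb 1 2
  have hb10 := hb 1 0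
  have hb20 := hb 2 0
  have hb21 := hb 2 1
  rw [pb_coord]
  simp only [Fintype.sum_sum_type, Fin.sum_univ_three, piB, Fin.isValue, dot3,
    pd_C2e_inl, pd_C2e_inr, pd_C1e_inl, pd_C1e_inr]
  simp only [Fin.sum_univ_three, eps000, eps001, eps002, eps010, eps011, eps012,
    eps020, eps021, eps022, eps100, eps101, eps102, eps110, eps111, eps112,
    eps120, eps121, eps122, eps200, eps201, eps202, eps210, eps211, eps212,
    eps220, eps221, eps222, pmg, fmm, alf, dot3, filt0, filt1, filt2,
    Matrix.cons_val_zero, Matrix.cons_val_one, Matrix.head_cons, Matrix.cons_val_two,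
    Matrix.tail_cons]
  try field_simp
  try ring
  try norm_num

theorem case_C2_inr1
    (a : R3) (d : ℝ) (hd : 0 < d) (ha : ∀ i, a i ≠ 0)
    (hb : ∀ i j : Fin 3, bb a i + bb a j ≠ 0)
    (x : St) (hx : 0 < 1 - d * dot3 x.1 (Aapp a x.1)) :
    pb (piB a d) (fun y => ∑ m, y.1 m * bb a m * y.2 m) (coordFn (.inr 1)) x = 0 := by
  have hd0 : d ≠ 0 := ne_of_gt hd
  have hg : gfun a d x.1 ≠ 0 := ne_of_gt (Real.sqrt_pos.mpr hx)
  have hb0 : bb a 0 ≠ 0 := fun h => hb 0 0 (by rw [h]; ring)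
  have hb1 : bb a 1 ≠ 0 := fun h => hb 1 1 (by rw [h]; ring)
  have hb2 : bb a 2 ≠ 0 := fun h => hb 2 2 (by rw [h]; ring)
  have hb01 := hb 0 1
  have hb02 := hb 0 2
  have hb12 := hb 1 2
  have hb10 := hb 1 0
  have hb20 := hb 2 0
  have hb21 := hb 2 1
  rw [pb_coord]
  simp only [Fintype.sum_sum_type, Fin.sum_univ_three, piB, Fin.isValue, dot3,
    pd_C2e_inl, pd_C2e_inr, pd_C1e_inl, pd_C1e_inr]
  simp only [Fin.sum_univ_three, eps000, eps001, eps002, eps010, eps011, eps012,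
    eps020, eps021, eps022, eps100, eps101, eps102, eps110, eps111, eps112,
    eps120, eps121, eps122, eps200, eps201, eps202, eps210, eps211, eps212,
    eps220, eps221, eps222, pmg, fmm, alf, dot3, filt0, filt1, filt2,
    Matrix.cons_val_zero, Matrix.cons_val_one, Matrix.head_cons, Matrix.cons_val_two,
    Matrix.tail_cons]
  try field_simp
  try ring
  try norm_num

theorem case_C1_inr2
    (a : R3) (d : ℝ) (hd : 0 < d) (ha : ∀ i, a i ≠ 0)
    (hb : ∀ i j : Fin 3, bb a i + bb a j ≠ 0)
    (x : St) (hx : 0 < 1 - d * dot3 x.1 (Aapp a x.1)) :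
    pb (piB a d) (fun y => dot3 y.1 y.1) (coordFn (.inr 2)) x = 0 := by
  have hd0 : d ≠ 0 := ne_of_gt hd
  have hg : gfun a d x.1 ≠ 0 := ne_of_gt (Real.sqrt_pos.mpr hx)
  have hb0 : bb a 0 ≠ 0 := fun h => hb 0 0 (by rw [h]; ring)
  have hb1 : bb a 1 ≠ 0 := fun h => hb 1 1 (by rw [h]; ring)
  have hb2 : bb a 2 ≠ 0 := fun h => hb 2 2 (by rw [h]; ring)
  have hb01 := hb 0 1
  have hb02 := hb 0 2
  have hb12 := hb 1 2
  have hb10 := hb 1 0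
  have hb20 := hb 2 0
  have hb21 := hb 2 1
  rw [pb_coord]
  simp only [Fintype.sum_sum_type, Fin.sum_univ_three, piB, Fin.isValue, dot3,
    pd_C2e_inl, pd_C2e_inr, pd_C1e_inl, pd_C1e_inr]
  simp only [Fin.sum_univ_three, eps000, eps001, eps002, eps010, eps011, eps012,
    eps020, eps021, eps022, eps100, eps101, eps102, eps110, eps111, eps112,
    eps120, eps121, eps122, eps200, eps201, eps202, eps210, eps211, eps212,
    eps220, eps221, eps222, pmg, fmm, alf, dot3, filt0, filt1, filt2,
    Matrix.cons_val_zero, Matrix.cons_val_one, Matrix.head_cons, Matrix.cons_val_two,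
    Matrix.tail_cons]
  try field_simp
  try ring
  try norm_num

theorem case_C2_inr2
    (a : R3) (d : ℝ) (hd : 0 < d) (ha : ∀ i, a i ≠ 0)
    (hb : ∀ i j : Fin 3, bb a i + bb a j ≠ 0)
    (x : St) (hx : 0 < 1 - d * dot3 x.1 (Aapp a x.1)) :
    pb (piB a d) (fun y => ∑ m, y.1 m * bb a m * y.2 m) (coordFn (.inr 2)) x = 0 := by
  have hd0 : d ≠ 0 := ne_of_gt hd
  have hg : gfun a d x.1 ≠ 0 := ne_of_gt (Real.sqrt_pos.mpr hx)
  have hb0 : bb a 0 ≠ 0 := fun h => hb 0 0 (by rw [h]; ring)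
  have hb1 : bb a 1 ≠ 0 := fun h => hb 1 1 (by rw [h]; ring)
  have hb2 : bb a 2 ≠ 0 := fun h => hb 2 2 (by rw [h]; ring)
  have hb01 := hb 0 1
  have hb02 := hb 0 2
  have hb12 := hb 1 2
  have hb10 := hb 1 0
  have hb20 := hb 2 0
  have hb21 := hb 2 1
  rw [pb_coord]
  simp only [Fintype.sum_sum_type, Fin.sum_univ_three, piB, Fin.isValue, dot3,
    pd_C2e_inl, pd_C2e_inr, pd_C1e_inl, pd_C1e_inr]
  simp only [Fin.sum_univ_three, eps000, eps001, eps002, eps010, eps011, eps012,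
    eps020, eps021, eps022, eps100, eps101, eps102, eps110, eps111, eps112,
    eps120, eps121, eps122, eps200, eps201, eps202, eps210, eps211, eps212,
    eps220, eps221, eps222, pmg, fmm, alf, dot3, filt0, filt1, filt2,
    Matrix.cons_val_zero, Matrix.cons_val_one, Matrix.head_cons, Matrix.cons_val_two,
    Matrix.tail_cons]
  try field_simp
  try ring
  try norm_num

/-- C1 = (γ,γ) and C2 = (γ, B M) are Casimir functions of {·,·}_b. -/
theorem casimirs_b_bracket
    (a : R3) (d : ℝ) (hd : 0 < d) (ha : ∀ i, a i ≠ 0)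
    (hb : ∀ i j : Fin 3, bb a i + bb a j ≠ 0)
    (x : St) (hx : 0 < 1 - d * dot3 x.1 (Aapp a x.1)) :
    ∀ u : Fin 3 ⊕ Fin 3,
      pb (piB a d) (fun y => dot3 y.1 y.1) (coordFn u) x = 0 ∧
      pb (piB a d) (fun y => ∑ m, y.1 m * bb a m * y.2 m) (coordFn u) x = 0 := by
  intro u
  have h3 : ∀ j : Fin 3, j = 0 ∨ j = 1 ∨ j = 2 := by decide
  rcases u with j | j <;> rcases h3 j with h | h | h <;> subst h
  · exact ⟨case_C1_inl0 a d hd ha hb x hx, case_C2_inl0 a d hd ha hb x hx⟩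
  · exact ⟨case_C1_inl1 a d hd ha hb x hx, case_C2_inl1 a d hd ha hb x hx⟩
  · exact ⟨case_C1_inl2 a d hd ha hb x hx, case_C2_inl2 a d hd ha hb x hx⟩
  · exact ⟨case_C1_inr0 a d hd ha hb x hx, case_C2_inr0 a d hd ha hb x hx⟩
  · exact ⟨case_C1_inr1 a d hd ha hb x hx, case_C2_inr1 a d hd ha hb x hx⟩
  · exact ⟨case_C1_inr2 a d hd ha hb x hx, case_C2_inr2 a d hd ha hb x hx⟩
end
end
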